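/- The symmetrized shuffling operator ν_k on CA^n can be written as ν_k = Σ_{1 ≤ a₁ ≤ ⋯ ≤ a_k ≤ n} (1 / ∏_{j} #{l ∈ [k] : a_l = j}!) · sh_{a₁} ∘ ⋯ ∘ sh_{a_k} ∘ ∂_{a₁} ∘ ⋯ ∘ ∂_{a_k}, where the sum is over weakly increasing k-tuples of letters. -/

import Mathlib

/-- Insertion operator: `shOp A a` sends a word `w` (basis element of the free
`ℂ`-vector space on words) to the sum of the words obtained by inserting the
letter `a` at each of the `w.length + 1` possible positions. -/
noncomputable def shOp (A : Type) [DecidableEq A] (a : A) :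
    (List A →₀ ℂ) →ₗ[ℂ] (List A →₀ ℂ) :=
  Finsupp.lift (List A →₀ ℂ) ℂ (List A)
    (fun w => ∑ i : Fin (w.length + 1), Finsupp.single (List.insertIdx w i a) 1)

/-- Deletion operator: `delOp A a` sends a word `w` to the sum, over all positions
`i` with `w_i = a`, of the word obtained by deleting position `i`. -/
noncomputable def delOp (A : Type) [DecidableEq A] (a : A) :
    (List A →₀ ℂ) →ₗ[ℂ] (List A →₀ ℂ) :=
  Finsupp.lift (List A →₀ ℂ) ℂ (List A)
    (fun w => ∑ i : Fin w.length,
      if w.get i = a then Finsupp.single (w.eraseIdx i) 1 else 0)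

/-- Replacement operator: `thetaOp A b a` sends a word `w` to the sum, over all
positions `i` with `w_i = b`, of the word obtained by replacing the letter at
position `i` by `a`. -/
noncomputable def thetaOp (A : Type) [DecidableEq A] (b a : A) :
    (List A →₀ ℂ) →ₗ[ℂ] (List A →₀ ℂ) :=
  Finsupp.lift (List A →₀ ℂ) ℂ (List A)
    (fun w => ∑ i : Fin w.length,
      if w.get i = b then Finsupp.single (w.set i a) 1 else 0)


/-- Composition `sh_{a₁} ∘ sh_{a₂} ∘ ⋯ ∘ sh_{a_k}` of insertion operators along a list. -/
noncomputable def shChain (A : Type) [DecidableEq A] (l : List A) :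
    (List A →₀ ℂ) →ₗ[ℂ] (List A →₀ ℂ) :=
  l.foldr (fun c f => (shOp A c).comp f) LinearMap.id

/-- Composition `∂_{a₁} ∘ ∂_{a₂} ∘ ⋯ ∘ ∂_{a_k}` of deletion operators along a list. -/
noncomputable def delChain (A : Type) [DecidableEq A] (l : List A) :
    (List A →₀ ℂ) →ₗ[ℂ] (List A →₀ ℂ) :=
  l.foldr (fun c f => (delOp A c).comp f) LinearMap.id


set_option linter.unusedSectionVars false
set_option maxHeartbeats 1000000

section Aux
open Finset Function List


variable {A : Type} [DecidableEq A]

lemma shOp_single (a : A) (w : List A) :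
    shOp A a (Finsupp.single w 1) =
      ∑ i : Fin (w.length + 1), Finsupp.single (List.insertIdx w i a) 1 := by
  simp [shOp, Finsupp.lift_apply, Finsupp.sum_single_index]

lemma delOp_single (a : A) (w : List A) :
    delOp A a (Finsupp.single w 1) =
      ∑ i : Fin w.length, if w.get i = a then Finsupp.single (w.eraseIdx i) 1 else 0 := by
  simp [delOp, Finsupp.lift_apply, Finsupp.sum_single_index]

lemma ofFn_eraseIdx {q : ℕ} (h : Fin (q+1) → A) (i : Fin (q+1)) :
    (List.ofFn h).eraseIdx i = List.ofFn (h ∘ i.succAbove) := by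
  apply List.ext_getElem
  · have := i.isLt; simp [List.length_eraseIdx]; omega
  · intro j h1 h2
    simp only [List.getElem_eraseIdx, List.getElem_ofFn, Function.comp_apply]
    simp only [List.length_ofFn] at h2
    split_ifs with hj hlen
    · congr 1
      apply Fin.ext
      rw [Fin.succAbove_of_castSucc_lt]
      · rfl
      · simpa [Fin.lt_iff_val_lt_val] using hj
    · congr 1
      apply Fin.ext
      rw [Fin.succAbove_of_le_castSucc]
      · rfl
      · rw [Fin.le_castSucc_iff]
        simp only [Fin.lt_iff_val_lt_val, Fin.val_succ]
        omega

lemma ofFn_insertIdx {q : ℕ} (h : Fin q → A) (x : A) (i : Fin (q+1)) :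
    List.insertIdx (List.ofFn h) i x = List.ofFn (i.insertNth x h) := by
  apply List.ext_getElem
  · rw [List.length_insertIdx_of_le_length (by simp [Fin.is_le i])]
    simp
  · intro j h1 h2
    simp only [List.length_ofFn] at h2
    rcases lt_trichotomy j (i : ℕ) with hj | hj | hj
    · have jq : j < q := by have := i.isLt; omega
      rw [List.getElem_insertIdx_of_lt hj h1, List.getElem_ofFn]
      have e : (⟨j, h2⟩ : Fin (q+1)) = i.succAbove ⟨j, jq⟩ := by
        apply Fin.ext
        rw [Fin.succAbove_of_castSucc_lt]
        · rfl
        · simpa [Fin.lt_iff_val_lt_val] using hj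
      rw [List.getElem_ofFn, e, Fin.insertNth_apply_succAbove]
    · subst hj
      rw [List.getElem_insertIdx_self h1]
      have : (⟨(i:ℕ), h2⟩ : Fin (q+1)) = i := by apply Fin.ext; rfl
      rw [List.getElem_ofFn, this, Fin.insertNth_apply_same]
    · obtain ⟨d, rfl⟩ : ∃ d, j = i + d + 1 := ⟨j - i - 1, by omega⟩
      have jq : ↑i + d < q := by omega
      rw [List.getElem_insertIdx_add_succ _ _ _ _ (by simp at h2 ⊢; omega), List.getElem_ofFn]
      have e : (⟨↑i + d + 1, h2⟩ : Fin (q+1)) = i.succAbove ⟨↑i + d, jq⟩ := by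
        apply Fin.ext
        rw [Fin.succAbove_of_le_castSucc]
        · rfl
        · simp only [Fin.le_castSucc_iff, Fin.lt_iff_val_lt_val, Fin.val_succ]
          omega
      rw [List.getElem_ofFn, e, Fin.insertNth_apply_succAbove]

/-- skip i : the increasing enumeration of `Fin r` minus `i`. -/
def skip {r : ℕ} (i : Fin r) : Fin (r-1) → Fin r := fun t =>
  if (t : ℕ) < (i : ℕ) then ⟨t, by have := t.isLt; omega⟩
  else ⟨(t : ℕ) + 1, by have := t.isLt; have := i.isLt; omega⟩

lemma skip_strictMono {r : ℕ} (i : Fin r) : StrictMono (skip i) := by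
  intro a b hab
  have hab' : (a : ℕ) < (b : ℕ) := hab
  simp only [skip]
  split_ifs <;> simp only [Fin.lt_iff_val_lt_val] <;> omega

lemma skip_ne {r : ℕ} (i : Fin r) (t : Fin (r-1)) : skip i t ≠ i := by
  simp only [skip]
  split_ifs with h <;> simp only [ne_eq, Fin.ext_iff] <;> omega

lemma skip_injective {r : ℕ} (i : Fin r) : Function.Injective (skip i) :=
  (skip_strictMono i).injective

lemma skip_surj {r : ℕ} (i : Fin r) {x : Fin r} (hx : x ≠ i) : ∃ t, skip i t = x := by
  rcases lt_or_gt_of_ne (fun h => hx (Fin.ext h) : (x:ℕ) ≠ (i:ℕ)) with h | h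
  · refine ⟨⟨x, by have := i.isLt; omega⟩, ?_⟩
    simp only [skip]
    rw [if_pos (by simpa using h)]
  · refine ⟨⟨(x:ℕ) - 1, by have := x.isLt; omega⟩, ?_⟩
    simp only [skip]
    rw [if_neg (by simp; omega)]
    exact Fin.ext (by simp; omega)

lemma skip_eq_succAbove {q : ℕ} (i : Fin (q+1)) : skip i = i.succAbove := by
  funext t
  simp only [skip]
  split_ifs with h
  · rw [Fin.succAbove_of_castSucc_lt]
    · rfl
    · simpa [Fin.lt_iff_val_lt_val] using h
  · rw [Fin.succAbove_of_le_castSucc]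
    · rfl
    · rw [Fin.le_castSucc_iff]
      simp only [Fin.lt_iff_val_lt_val, Fin.val_succ]
      omega

section compEnum

variable {k m M : ℕ}

/-- Increasing enumeration of the complement of the range of `φ`. -/
noncomputable def compEnum (φ : Fin k → Fin m) : Fin (m - k) → Fin m :=
  if h : ((Finset.univ.image φ)ᶜ : Finset (Fin m)).card = m - k
  then fun t => (Finset.orderEmbOfFin _ h) t
  else fun t => ⟨0, by have := t.isLt; omega⟩

lemma card_compl_image {φ : Fin k → Fin m} (hφ : Function.Injective φ) :
    ((Finset.univ.image φ)ᶜ : Finset (Fin m)).card = m - k := by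
  rw [Finset.card_compl, Finset.card_image_of_injective _ hφ]
  simp

lemma compEnum_def {φ : Fin k → Fin m} (hφ : Function.Injective φ) :
    compEnum φ = fun t => (Finset.orderEmbOfFin _ (card_compl_image hφ)) t := by
  unfold compEnum
  rw [dif_pos (card_compl_image hφ)]

lemma compEnum_strictMono {φ : Fin k → Fin m} (hφ : Function.Injective φ) :
    StrictMono (compEnum φ) := by
  rw [compEnum_def hφ]
  exact (Finset.orderEmbOfFin _ _).strictMono

lemma compEnum_injective {φ : Fin k → Fin m} (hφ : Function.Injective φ) :
    Function.Injective (compEnum φ) := (compEnum_strictMono hφ).injective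

lemma compEnum_not_mem {φ : Fin k → Fin m} (hφ : Function.Injective φ) (t : Fin (m-k)) :
    compEnum φ t ∉ Finset.univ.image φ := by
  rw [compEnum_def hφ]
  have := Finset.orderEmbOfFin_mem _ (card_compl_image hφ) t
  exact Finset.mem_compl.1 this

lemma compEnum_ne {φ : Fin k → Fin m} (hφ : Function.Injective φ) (t : Fin (m-k)) (j : Fin k) :
    compEnum φ t ≠ φ j := by
  intro h
  exact compEnum_not_mem hφ t (Finset.mem_image.2 ⟨j, Finset.mem_univ _, h.symm⟩)

lemma compEnum_surj {φ : Fin k → Fin m} (hφ : Function.Injective φ) {x : Fin m}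
    (hx : x ∉ Finset.univ.image φ) : ∃ t, compEnum φ t = x := by
  rw [compEnum_def hφ]
  have : x ∈ Set.range (Finset.orderEmbOfFin _ (card_compl_image hφ)) := by
    rw [Finset.range_orderEmbOfFin]
    simpa using hx
  obtain ⟨t, ht⟩ := this
  exact ⟨t, ht⟩

lemma compEnum_unique {φ : Fin k → Fin m} (hφ : Function.Injective φ)
    {g : Fin (m - k) → Fin m} (hg : StrictMono g)
    (h : ∀ t, g t ∉ Finset.univ.image φ) : g = compEnum φ := by
  rw [compEnum_def hφ]
  exact Finset.orderEmbOfFin_unique (card_compl_image hφ)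
    (fun t => Finset.mem_compl.2 (h t)) hg

end compEnum

section asmFun

variable {A : Type} {k M m : ℕ}

/-- The function `Fin M → A` whose values on `range ψ` are given by `b` (matching via `ψ`)
and on the complement are given by `g` (matching via the increasing enumeration). -/
noncomputable def asmFun (b : Fin k → A) (g : Fin m → A) (hm : M - k = m)
    (ψ : Fin k → Fin M) : Fin M → A :=
  Function.extend ψ b (Function.extend (fun t : Fin m => compEnum ψ (Fin.cast hm.symm t)) g
    (fun i => if h : (i : ℕ) < k then b ⟨i, h⟩
      else if h2 : (i : ℕ) - k < m then g ⟨(i : ℕ) - k, h2⟩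
      else absurd (show (i : ℕ) - k < m by have := i.isLt; omega) h2))

lemma asmFun_apply₁ {b : Fin k → A} {g : Fin m → A} {hm : M - k = m} {ψ : Fin k → Fin M}
    (hψ : Function.Injective ψ) (j : Fin k) : asmFun b g hm ψ (ψ j) = b j := by
  simp only [asmFun]
  rw [hψ.extend_apply]

lemma asmFun_apply₂ {b : Fin k → A} {g : Fin m → A} {hm : M - k = m} {ψ : Fin k → Fin M}
    (hψ : Function.Injective ψ) (t : Fin m) :
    asmFun b g hm ψ (compEnum ψ (Fin.cast hm.symm t)) = g t := by
  simp only [asmFun]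
  rw [Function.extend_apply']
  · have hinj : Function.Injective (fun t : Fin m => compEnum ψ (Fin.cast hm.symm t)) :=
      fun a b hab => by
        have h3 := compEnum_injective hψ hab
        exact Fin.ext (by simpa using congrArg Fin.val h3)
    exact hinj.extend_apply g _ t
  · rintro ⟨j, hj⟩
    exact compEnum_ne hψ _ j hj.symm

lemma asmFun_unique {b : Fin k → A} {g : Fin m → A} {hm : M - k = m} {ψ : Fin k → Fin M}
    (hψ : Function.Injective ψ) {F : Fin M → A}
    (h1 : ∀ j, F (ψ j) = b j)
    (h2 : ∀ t : Fin m, F (compEnum ψ (Fin.cast hm.symm t)) = g t) :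
    F = asmFun b g hm ψ := by
  funext i
  by_cases hi : i ∈ Finset.univ.image ψ
  · obtain ⟨j, -, rfl⟩ := Finset.mem_image.1 hi
    rw [h1, asmFun_apply₁ hψ]
  · obtain ⟨t, ht⟩ := compEnum_surj hψ hi
    have heq : i = compEnum ψ (Fin.cast hm.symm (Fin.cast hm t)) := by
      rw [← ht]; exact congrArg (compEnum ψ) (Fin.ext rfl)
    have e1 : F i = g (Fin.cast hm t) := by
      conv_lhs => rw [heq]
      exact h2 _
    have e2 : asmFun b g hm ψ i = g (Fin.cast hm t) := by
      conv_lhs => rw [heq]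
      exact asmFun_apply₂ hψ _
    rw [e1, e2]

end asmFun

section chains

variable {A : Type} [DecidableEq A]

lemma delChain_nil : delChain A [] = LinearMap.id := rfl

lemma delChain_cons (x : A) (l : List A) :
    delChain A (x :: l) = (delOp A x).comp (delChain A l) := rfl

lemma shChain_nil : shChain A [] = LinearMap.id := rfl

lemma shChain_cons (x : A) (l : List A) :
    shChain A (x :: l) = (shOp A x).comp (shChain A l) := rfl

lemma ofFn_eraseIdx' {r : ℕ} (h : Fin r → A) (i : Fin r) :
    (List.ofFn h).eraseIdx i = List.ofFn (h ∘ skip i) := by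
  cases r with
  | zero => exact i.elim0
  | succ q => rw [skip_eq_succAbove]; exact ofFn_eraseIdx h i

lemma delOp_ofFn (a : A) {r : ℕ} (h : Fin r → A) :
    delOp A a (Finsupp.single (List.ofFn h) 1) =
      ∑ i : Fin r, if h i = a then Finsupp.single (List.ofFn (h ∘ skip i)) 1 else 0 := by
  rw [delOp_single]
  refine Finset.sum_equiv (finCongr (List.length_ofFn (f := h))) (by simp) ?_
  intro i _
  have hget : (List.ofFn h).get i = h (finCongr (List.length_ofFn (f := h)) i) := by
    rw [List.get_ofFn]
    rfl
  rw [hget]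
  by_cases hc : h (finCongr (List.length_ofFn (f := h)) i) = a
  · rw [if_pos hc, if_pos hc]
    congr 1
    exact ofFn_eraseIdx' h (finCongr (List.length_ofFn (f := h)) i)
  · rw [if_neg hc, if_neg hc]

lemma shOp_ofFn (a : A) {r : ℕ} (h : Fin r → A) :
    shOp A a (Finsupp.single (List.ofFn h) 1) =
      ∑ i : Fin (r+1), Finsupp.single (List.ofFn (i.insertNth a h)) 1 := by
  rw [shOp_single]
  refine Finset.sum_equiv (finCongr (by simp)) (by simp) ?_
  intro i _
  exact congrArg (fun l => Finsupp.single l (1:ℂ))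
    (ofFn_insertIdx h a (finCongr (by simp) i))

lemma delChain_ofFn {k m : ℕ} (b : Fin k → A) (f : Fin m → A) :
    delChain A (List.ofFn b) (Finsupp.single (List.ofFn f) 1) =
      ∑ φ ∈ Finset.univ.filter
          (fun φ : Fin k → Fin m => Function.Injective φ ∧ f ∘ φ = b),
        Finsupp.single (List.ofFn (f ∘ compEnum φ)) 1 := by
  classical
  induction k with
  | zero =>
    rw [List.ofFn_zero, delChain_nil]
    have huniv : (Finset.univ.filter
        (fun φ : Fin 0 → Fin m => Function.Injective φ ∧ f ∘ φ = b)) = Finset.univ := by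
      apply Finset.filter_true_of_mem
      intro φ _
      exact ⟨fun x => x.elim0, funext fun x => x.elim0⟩
    rw [huniv]
    haveI : Unique (Fin 0 → Fin m) :=
      ⟨⟨fun x => x.elim0⟩, fun φ => funext fun x => x.elim0⟩
    rw [Fintype.sum_unique]
    have hce : (id : Fin m → Fin m) = compEnum (default : Fin 0 → Fin m) := by
      apply compEnum_unique (fun x => x.elim0) strictMono_id
      intro t ht
      simp at ht
    simp only [LinearMap.id_apply]
    congr 2
    rw [← hce]
    rfl
  | succ k ih =>
    have step1 : delChain A (List.ofFn b) (Finsupp.single (List.ofFn f) 1)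
        = ∑ φ' ∈ Finset.univ.filter (fun φ : Fin k → Fin m =>
              Function.Injective φ ∧ f ∘ φ = fun i => b i.succ),
            delOp A (b 0) (Finsupp.single (List.ofFn (f ∘ compEnum φ')) 1) := by
      rw [List.ofFn_succ, delChain_cons, LinearMap.comp_apply, ih, map_sum]
    rw [step1]
    have step2 : ∀ φ' : Fin k → Fin m,
        delOp A (b 0) (Finsupp.single (List.ofFn (f ∘ compEnum φ')) 1)
          = ∑ i ∈ Finset.univ.filter (fun i : Fin (m - k) => f (compEnum φ' i) = b 0),
              Finsupp.single (List.ofFn (f ∘ (compEnum φ' ∘ skip i))) 1 := by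
      intro φ'
      rw [delOp_ofFn, Finset.sum_filter]
      rfl
    rw [Finset.sum_congr rfl (fun φ' _ => step2 φ'), Finset.sum_sigma']
    refine Finset.sum_bij
      (fun p _ => (fun j => Fin.cases (compEnum p.1 p.2) p.1 j : Fin (k+1) → Fin m))
      ?_ ?_ ?_ ?_
    · -- maps into target filter
      rintro ⟨φ', i⟩ hp
      simp only [Finset.mem_sigma, Finset.mem_filter, Finset.mem_univ, true_and] at hp
      obtain ⟨⟨hinj, hfb⟩, hcond⟩ := hp
      simp only [Finset.mem_filter, Finset.mem_univ, true_and]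
      constructor
      · -- injectivity
        intro j1 j2 hj
        induction j1 using Fin.cases with
        | zero =>
          induction j2 using Fin.cases with
          | zero => rfl
          | succ j2' =>
            simp only [Fin.cases_zero, Fin.cases_succ] at hj
            exact absurd hj.symm (compEnum_ne hinj i j2').symm
        | succ j1' =>
          induction j2 using Fin.cases with
          | zero =>
            simp only [Fin.cases_zero, Fin.cases_succ] at hj
            exact absurd hj (compEnum_ne hinj i j1').symm
          | succ j2' =>
            simp only [Fin.cases_succ] at hj
            rw [hinj hj]
      · -- f ∘ φ = b
        funext j
        induction j using Fin.cases with
        | zero => simpa using hcond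
        | succ j' =>
          simp only [Function.comp_apply, Fin.cases_succ]
          exact congrFun hfb j'
    · -- injectivity of the map on the sigma set
      rintro ⟨φ1, i1⟩ hp1 ⟨φ2, i2⟩ hp2 heq
      simp only [Finset.mem_sigma, Finset.mem_filter, Finset.mem_univ, true_and] at hp1 hp2
      have hphi : φ1 = φ2 := by
        funext j
        have := congrFun heq j.succ
        simpa using this
      subst hphi
      have h0 := congrFun heq 0
      simp only [Fin.cases_zero] at h0
      have : i1 = i2 := compEnum_injective hp1.1.1 h0
      simp [this]
    · -- surjectivity
      intro φ hφ
      simp only [Finset.mem_filter, Finset.mem_univ, true_and] at hφ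
      obtain ⟨hinj, hfb⟩ := hφ
      have hinj' : Function.Injective (fun j : Fin k => φ j.succ) :=
        fun a b hab => Fin.succ_injective _ (hinj hab)
      have hnotmem : φ 0 ∉ Finset.univ.image (fun j : Fin k => φ j.succ) := by
        simp only [Finset.mem_image, Finset.mem_univ, true_and, not_exists]
        intro j hj
        exact absurd (hinj hj) (Fin.succ_ne_zero j)
      obtain ⟨i, hi⟩ := compEnum_surj hinj' hnotmem
      have hfb' : (f ∘ fun j : Fin k => φ j.succ) = fun i : Fin k => b i.succ :=
        funext fun j => congrFun hfb j.succ
      refine ⟨⟨fun j => φ j.succ, i⟩, ?_, ?_⟩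
      · simp only [Finset.mem_sigma, Finset.mem_filter, Finset.mem_univ, true_and]
        refine ⟨⟨hinj', hfb'⟩, ?_⟩
        rw [hi]
        exact congrFun hfb 0
      · funext j
        induction j using Fin.cases with
        | zero => simpa using hi
        | succ j' => simp
    · -- summand equality
      rintro ⟨φ', i⟩ hp
      simp only [Finset.mem_sigma, Finset.mem_filter, Finset.mem_univ, true_and] at hp
      obtain ⟨⟨hinj, hfb⟩, hcond⟩ := hp
      set φ : Fin (k+1) → Fin m := fun j => Fin.cases (compEnum φ' i) φ' j with hphi
      have hphiinj : Function.Injective φ := by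
        intro j1 j2 hj
        induction j1 using Fin.cases with
        | zero =>
          induction j2 using Fin.cases with
          | zero => rfl
          | succ j2' =>
            simp only [hphi, Fin.cases_zero, Fin.cases_succ] at hj
            exact absurd hj (compEnum_ne hinj i j2')
        | succ j1' =>
          induction j2 using Fin.cases with
          | zero =>
            simp only [hphi, Fin.cases_zero, Fin.cases_succ] at hj
            exact absurd hj.symm (compEnum_ne hinj i j1')
          | succ j2' =>
            simp only [hphi, Fin.cases_succ] at hj
            rw [hinj hj]
      have hcomp : compEnum φ' ∘ skip i = compEnum φ := by
        apply compEnum_unique hphiinj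
        · exact (compEnum_strictMono hinj).comp (skip_strictMono i)
        · intro t
          simp only [Finset.mem_image, Finset.mem_univ, true_and, not_exists,
            Function.comp_apply]
          intro j hj
          induction j using Fin.cases with
          | zero =>
            simp only [hphi, Fin.cases_zero] at hj
            exact skip_ne i t (compEnum_injective hinj hj.symm)
          | succ j' =>
            simp only [hphi, Fin.cases_succ] at hj
            exact absurd hj (compEnum_ne hinj _ j').symm
      rw [← hcomp]

end chains

section shchain

variable {A : Type} [DecidableEq A]

lemma cast_strictMono {p q : ℕ} (h : p = q) : StrictMono (Fin.cast h) := by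
  intro a b hab
  exact hab

lemma shChain_ofFn {k m : ℕ} (b : Fin k → A) (g : Fin m → A) :
    shChain A (List.ofFn b) (Finsupp.single (List.ofFn g) 1) =
      ∑ ψ ∈ Finset.univ.filter (fun ψ : Fin k → Fin (m+k) => Function.Injective ψ),
        Finsupp.single (List.ofFn (asmFun b g (by omega : m + k - k = m) ψ)) 1 := by
  classical
  induction k with
  | zero =>
    rw [List.ofFn_zero, shChain_nil]
    have huniv : (Finset.univ.filter
        (fun ψ : Fin 0 → Fin (m+0) => Function.Injective ψ)) = Finset.univ := by
      apply Finset.filter_true_of_mem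
      intro ψ _
      exact fun x => x.elim0
    rw [huniv]
    haveI : Unique (Fin 0 → Fin (m+0)) :=
      ⟨⟨fun x => x.elim0⟩, fun ψ => funext fun x => x.elim0⟩
    rw [Fintype.sum_unique]
    simp only [LinearMap.id_apply]
    have hψ : Function.Injective (default : Fin 0 → Fin (m+0)) := fun x => x.elim0
    have : (g : Fin (m+0) → A) = asmFun b g (by omega : m + 0 - 0 = m) default := by
      apply asmFun_unique hψ
      · intro j; exact j.elim0
      · intro t
        have hce : (id : Fin (m+0-0) → Fin (m+0)) = compEnum (default : Fin 0 → Fin (m+0)) := by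
          apply compEnum_unique hψ strictMono_id
          intro t' ht'
          simp at ht'
        rw [← hce]
        rfl
    exact congrArg (fun h => Finsupp.single (List.ofFn h) (1:ℂ)) this
  | succ k ih =>
    have hm' : m + k - k = m := by omega
    have step1 : shChain A (List.ofFn b) (Finsupp.single (List.ofFn g) 1)
        = ∑ ψ' ∈ Finset.univ.filter (fun ψ : Fin k → Fin (m+k) => Function.Injective ψ),
            shOp A (b 0) (Finsupp.single (List.ofFn (asmFun (fun i => b i.succ) g hm' ψ')) 1) := by
      rw [List.ofFn_succ, shChain_cons, LinearMap.comp_apply, ih, map_sum]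
    rw [step1]
    have step2 : ∀ ψ' : Fin k → Fin (m+k),
        shOp A (b 0) (Finsupp.single (List.ofFn (asmFun (fun i => b i.succ) g hm' ψ')) 1)
          = ∑ i : Fin ((m+k)+1),
              Finsupp.single (List.ofFn (i.insertNth (b 0) (asmFun (fun i => b i.succ) g hm' ψ'))) 1 := by
      intro ψ'
      rw [shOp_ofFn]
    rw [Finset.sum_congr rfl (fun ψ' _ => step2 ψ')]
    rw [← Finset.sum_product']
    refine Finset.sum_bij
      (fun p _ => (fun j => Fin.cases p.2 (fun j' => skip p.2 (p.1 j')) j :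
        Fin (k+1) → Fin (m+(k+1)))) ?_ ?_ ?_ ?_
    · rintro ⟨ψ', i⟩ hp
      simp only [Finset.mem_product, Finset.mem_filter, Finset.mem_univ, true_and, and_true] at hp
      simp only [Finset.mem_filter, Finset.mem_univ, true_and]
      intro j1 j2 hj
      induction j1 using Fin.cases with
      | zero =>
        induction j2 using Fin.cases with
        | zero => rfl
        | succ j2' =>
          simp only [Fin.cases_zero, Fin.cases_succ] at hj
          exact absurd hj.symm (skip_ne i (ψ' j2'))
      | succ j1' =>
        induction j2 using Fin.cases with
        | zero =>
          simp only [Fin.cases_zero, Fin.cases_succ] at hj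
          exact absurd hj (skip_ne i (ψ' j1'))
        | succ j2' =>
          simp only [Fin.cases_succ] at hj
          rw [hp (skip_injective i hj)]
    · rintro ⟨ψ1, i1⟩ hp1 ⟨ψ2, i2⟩ hp2 heq
      have h0 := congrFun heq 0
      simp only [Fin.cases_zero] at h0
      subst h0
      have hps : ψ1 = ψ2 := by
        funext j
        have := congrFun heq j.succ
        simp only [Fin.cases_succ] at this
        exact skip_injective i1 this
      rw [hps]
    · intro ψ hψ
      simp only [Finset.mem_filter, Finset.mem_univ, true_and] at hψ
      have hne : ∀ j : Fin k, ψ j.succ ≠ ψ 0 :=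
        fun j h => absurd (hψ h) (Fin.succ_ne_zero j)
      choose ψ' hψ' using fun j : Fin k => skip_surj (ψ 0) (hne j)
      refine ⟨⟨ψ', ψ 0⟩, ?_, ?_⟩
      · simp only [Finset.mem_product, Finset.mem_filter, Finset.mem_univ, true_and, and_true]
        intro a c hac
        have : ψ a.succ = ψ c.succ := by rw [← hψ' a, ← hψ' c, hac]
        exact Fin.succ_injective _ (hψ this)
      · funext j
        induction j using Fin.cases with
        | zero => simp
        | succ j' => simp [hψ' j']
    · rintro ⟨ψ', i⟩ hp
      dsimp only
      simp only [Finset.mem_product, Finset.mem_filter, Finset.mem_univ, true_and, and_true] at hp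
      set ψ : Fin (k+1) → Fin (m+(k+1)) :=
        fun j => Fin.cases i (fun j' => skip i (ψ' j')) j with hpsi
      have hψinj : Function.Injective ψ := by
        intro j1 j2 hj
        induction j1 using Fin.cases with
        | zero =>
          induction j2 using Fin.cases with
          | zero => rfl
          | succ j2' =>
            simp only [hpsi, Fin.cases_zero, Fin.cases_succ] at hj
            exact absurd hj.symm (skip_ne i (ψ' j2'))
        | succ j1' =>
          induction j2 using Fin.cases with
          | zero =>
            simp only [hpsi, Fin.cases_zero, Fin.cases_succ] at hj
            exact absurd hj (skip_ne i (ψ' j1'))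
          | succ j2' =>
            simp only [hpsi, Fin.cases_succ] at hj
            rw [hp (skip_injective i hj)]
      congr 1
      have he : m + (k+1) - (k+1) = m + k - k := by omega
      have hg0 : (fun t : Fin (m + (k+1) - (k+1)) =>
          skip i (compEnum ψ' (Fin.cast he t))) = compEnum ψ := by
        apply compEnum_unique hψinj
        · exact (skip_strictMono i).comp ((compEnum_strictMono hp).comp (cast_strictMono he))
        · intro t
          simp only [Finset.mem_image, Finset.mem_univ, true_and, not_exists]
          intro j hj
          induction j using Fin.cases with
          | zero =>
            simp only [hpsi, Fin.cases_zero] at hj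
            exact skip_ne i _ hj.symm
          | succ j' =>
            simp only [hpsi, Fin.cases_succ] at hj
            exact absurd (skip_injective i hj) (compEnum_ne hp _ j').symm
      congr 1
      apply asmFun_unique hψinj
      · intro j
        induction j using Fin.cases with
        | zero =>
          simp only [hpsi, Fin.cases_zero, Fin.insertNth_apply_same]
        | succ j' =>
          simp only [hpsi, Fin.cases_succ, ← skip_eq_succAbove]
          rw [show skip i (ψ' j') = i.succAbove (ψ' j') from congrFun (skip_eq_succAbove i) _,
            Fin.insertNth_apply_succAbove]
          rw [asmFun_apply₁ hp]
      · intro t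
        have ceq : compEnum ψ (Fin.cast (by omega : m + (k+1) - (k+1) = m).symm t)
            = skip i (compEnum ψ' (Fin.cast he
                (Fin.cast (by omega : m + (k+1) - (k+1) = m).symm t))) := by
          rw [← hg0]
        have hx : skip i (compEnum ψ' (Fin.cast he
              (Fin.cast (by omega : m + (k+1) - (k+1) = m).symm t)))
            = i.succAbove (compEnum ψ' (Fin.cast hm'.symm t)) := by
          rw [← skip_eq_succAbove]
          exact congrArg (skip i) (congrArg (compEnum ψ') (Fin.ext rfl))
        rw [ceq, hx, Fin.insertNth_apply_succAbove]
        exact asmFun_apply₂ hp t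

end shchain

section asmPerm

variable {n k : ℕ}

lemma asmFun_perm_injective {φ ψ : Fin k → Fin n} (hφ : Function.Injective φ)
    (hψ : Function.Injective ψ) :
    Function.Injective (asmFun φ (compEnum φ) (rfl : n - k = n - k) ψ) := by
  have key : ∀ x : Fin n, (∃ j, ψ j = x ∧ asmFun φ (compEnum φ) rfl ψ x = φ j) ∨
      (∃ t, compEnum ψ t = x ∧ asmFun φ (compEnum φ) rfl ψ x = compEnum φ t) := by
    intro x
    by_cases hx : x ∈ Finset.univ.image ψ
    · obtain ⟨j, -, rfl⟩ := Finset.mem_image.1 hx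
      exact Or.inl ⟨j, rfl, asmFun_apply₁ hψ j⟩
    · obtain ⟨t, rfl⟩ := compEnum_surj hψ hx
      refine Or.inr ⟨t, rfl, ?_⟩
      have : compEnum ψ t = compEnum ψ (Fin.cast (rfl : n - k = n - k).symm (Fin.cast rfl t)) :=
        congrArg _ (Fin.ext rfl)
      rw [this, asmFun_apply₂ hψ]
      exact congrArg _ (Fin.ext rfl)
  intro x y hxy
  rcases key x with ⟨j1, hx1, hx2⟩ | ⟨t1, hx1, hx2⟩ <;>
    rcases key y with ⟨j2, hy1, hy2⟩ | ⟨t2, hy1, hy2⟩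
  · rw [hx2, hy2] at hxy
    rw [← hx1, ← hy1, hφ hxy]
  · rw [hx2, hy2] at hxy
    exact absurd hxy.symm (compEnum_ne hφ t2 j1)
  · rw [hx2, hy2] at hxy
    exact absurd hxy (compEnum_ne hφ t1 j2)
  · rw [hx2, hy2] at hxy
    rw [← hx1, ← hy1, compEnum_injective hφ hxy]

/-- The permutation of `Fin n` sending `ψ j ↦ φ j` and matching the complements of the
ranges in increasing order. -/
noncomputable def asmPerm (φ ψ : Fin k → Fin n) : Equiv.Perm (Fin n) :=
  if h : Function.Injective φ ∧ Function.Injective ψ then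
    Equiv.ofBijective (asmFun φ (compEnum φ) (rfl : n - k = n - k) ψ)
      ((Finite.injective_iff_bijective).1 (asmFun_perm_injective h.1 h.2))
  else 1

lemma asmPerm_apply_psi {φ ψ : Fin k → Fin n} (hφ : Function.Injective φ)
    (hψ : Function.Injective ψ) (j : Fin k) : asmPerm φ ψ (ψ j) = φ j := by
  rw [asmPerm, dif_pos ⟨hφ, hψ⟩]
  show asmFun φ (compEnum φ) (rfl : n - k = n - k) ψ (ψ j) = φ j
  exact asmFun_apply₁ hψ j

lemma asmPerm_apply_comp {φ ψ : Fin k → Fin n} (hφ : Function.Injective φ)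
    (hψ : Function.Injective ψ) (t : Fin (n - k)) :
    asmPerm φ ψ (compEnum ψ t) = compEnum φ t := by
  rw [asmPerm, dif_pos ⟨hφ, hψ⟩]
  show asmFun φ (compEnum φ) (rfl : n - k = n - k) ψ (compEnum ψ t) = compEnum φ t
  have : compEnum ψ t = compEnum ψ (Fin.cast (rfl : n - k = n - k).symm (Fin.cast rfl t)) :=
    congrArg _ (Fin.ext rfl)
  rw [this, asmFun_apply₂ hψ]
  exact congrArg _ (Fin.ext rfl)

lemma asmPerm_symm_psi {φ ψ : Fin k → Fin n} (hφ : Function.Injective φ)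
    (hψ : Function.Injective ψ) (j : Fin k) : (asmPerm φ ψ)⁻¹ (φ j) = ψ j := by
  rw [← asmPerm_apply_psi hφ hψ j]
  exact Equiv.symm_apply_apply _ _

lemma asmPerm_symm_comp {φ ψ : Fin k → Fin n} (hφ : Function.Injective φ)
    (hψ : Function.Injective ψ) (t : Fin (n - k)) :
    (asmPerm φ ψ)⁻¹ (compEnum φ t) = compEnum ψ t := by
  rw [← asmPerm_apply_comp hφ hψ t]
  exact Equiv.symm_apply_apply _ _

end asmPerm

section counting

lemma card_sortable {k : ℕ} {B : Type} [LinearOrder B] [Fintype B] [DecidableEq B]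
    (g : Fin k → B) :
    (Finset.univ.filter (fun π : Equiv.Perm (Fin k) => Monotone (g ∘ π))).card
      = ∏ j : B, Nat.factorial ((Finset.univ.filter (fun x : Fin k => g x = j)).card) := by
  classical
  rw [← Fintype.card_subtype]
  have e1 : {π : Equiv.Perm (Fin k) // Monotone (g ∘ π)}
      ≃ {π : Equiv.Perm (Fin k) // g ∘ π = g ∘ Tuple.sort g} :=
    Equiv.subtypeEquivRight (fun π => (Tuple.comp_sort_eq_comp_iff_monotone).symm)
  have e2 : {π : Equiv.Perm (Fin k) // g ∘ π = g ∘ Tuple.sort g}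
      ≃ {σ : Equiv.Perm (Fin k) // (g ∘ Tuple.sort g) ∘ σ = g ∘ Tuple.sort g} := by
    refine Equiv.subtypeEquiv (Equiv.mulLeft (Tuple.sort g)⁻¹) (fun π => ?_)
    have hred : ∀ x, ((g ∘ Tuple.sort g) ∘ (Equiv.mulLeft (Tuple.sort g)⁻¹ π)) x
        = g (π x) := by
      intro x
      simp [Equiv.Perm.mul_apply]
    constructor
    · intro h
      funext x
      rw [hred x]
      exact congrFun h x
    · intro h
      funext x
      have := congrFun h x
      rw [hred x] at this
      exact this
  rw [Fintype.card_congr (e1.trans e2)]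
  rw [DomMulAct.stabilizer_card (g ∘ Tuple.sort g)]
  apply Finset.prod_congr rfl
  intro j _
  congr 1
  rw [Fintype.card_congr (Equiv.subtypeEquiv (Tuple.sort g) (fun x => Iff.rfl) :
    {x : Fin k // (g ∘ Tuple.sort g) x = j} ≃ {y : Fin k // g y = j})]
  exact Fintype.card_subtype _

lemma card_filter_monotone {n k : ℕ} (T : Finset (Fin n)) (hT : T.card = k)
    (f : Fin n → Fin n) :
    (Finset.univ.filter (fun φ : Fin k → Fin n =>
        Function.Injective φ ∧ Finset.univ.image φ = T ∧ Monotone (f ∘ φ))).card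
      = ∏ j : Fin n, Nat.factorial ((T.filter (fun x => f x = j)).card) := by
  classical
  set e : Fin k → Fin n := fun i => T.orderEmbOfFin hT i with he
  have einj : Function.Injective e := (T.orderEmbOfFin hT).injective
  have hmem : ∀ i, e i ∈ T := fun i => Finset.orderEmbOfFin_mem T hT i
  have hrange : ∀ x ∈ T, ∃ i, e i = x := by
    intro x hx
    have : x ∈ Set.range (T.orderEmbOfFin hT) := by
      rw [Finset.range_orderEmbOfFin]
      exact hx
    obtain ⟨i, hi⟩ := this
    exact ⟨i, hi⟩
  have step : (Finset.univ.filter (fun π : Equiv.Perm (Fin k) =>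
      Monotone ((f ∘ e) ∘ π))).card
      = (Finset.univ.filter (fun φ : Fin k → Fin n =>
        Function.Injective φ ∧ Finset.univ.image φ = T ∧ Monotone (f ∘ φ))).card := by
    refine Finset.card_bij (fun π (_ : π ∈ Finset.univ.filter (fun π : Equiv.Perm (Fin k) => Monotone ((f ∘ e) ∘ π))) => (e ∘ π : Fin k → Fin n)) ?_ ?_ ?_
    · intro π hπ
      simp only [Finset.mem_filter, Finset.mem_univ, true_and] at hπ ⊢
      refine ⟨einj.comp π.injective, ?_, hπ⟩
      ext x
      simp only [Finset.mem_image, Finset.mem_univ, true_and, Function.comp_apply]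
      constructor
      · rintro ⟨l, rfl⟩
        exact hmem _
      · intro hx
        obtain ⟨i, hi⟩ := hrange x hx
        exact ⟨π.symm i, by simp [hi]⟩
    · intro π1 h1 π2 h2 heq
      apply Equiv.ext
      intro x
      exact einj (congrFun heq x)
    · intro φ hφ
      simp only [Finset.mem_filter, Finset.mem_univ, true_and] at hφ
      obtain ⟨hinj, himg, hmono⟩ := hφ
      have humem : ∀ l, φ l ∈ T := by
        intro l
        rw [← himg]
        exact Finset.mem_image.2 ⟨l, Finset.mem_univ _, rfl⟩
      set u : Fin k → Fin k :=
        fun l => (T.orderIsoOfFin hT).symm ⟨φ l, humem l⟩ with hu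
      have huinj : Function.Injective u := by
        intro l1 l2 hl
        have h2 := congrArg (T.orderIsoOfFin hT) hl
        simp only [hu, OrderIso.apply_symm_apply] at h2
        exact hinj (congrArg Subtype.val h2)
      have hubij := (Finite.injective_iff_bijective).1 huinj
      have hphi : (e ∘ Equiv.ofBijective u hubij : Fin k → Fin n) = φ := by
        funext l
        show e (u l) = φ l
        rw [hu]
        have h3 : e ((T.orderIsoOfFin hT).symm ⟨φ l, humem l⟩)
            = ((T.orderIsoOfFin hT) ((T.orderIsoOfFin hT).symm ⟨φ l, humem l⟩) : Fin n) := by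
          rw [he]
          exact (Finset.coe_orderIsoOfFin_apply T hT _).symm
        rw [h3, OrderIso.apply_symm_apply]
      refine ⟨Equiv.ofBijective u hubij, ?_, hphi⟩
      simp only [Finset.mem_filter, Finset.mem_univ, true_and]
      show Monotone (f ∘ (e ∘ Equiv.ofBijective u hubij))
      rw [hphi]
      exact hmono
  rw [← step, card_sortable (f ∘ e)]
  apply Finset.prod_congr rfl
  intro j _
  congr 1
  refine Finset.card_bij (fun l (_ : l ∈ Finset.univ.filter (fun x : Fin k => (f ∘ e) x = j)) => e l) ?_ ?_ ?_
  · intro l hl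
    simp only [Finset.mem_filter, Finset.mem_univ, true_and, Function.comp_apply] at hl ⊢
    exact ⟨hmem l, hl⟩
  · intro l1 h1 l2 h2 heq
    exact einj heq
  · intro x hx
    simp only [Finset.mem_filter] at hx
    obtain ⟨i, hi⟩ := hrange x hx.1
    refine ⟨i, ?_, hi⟩
    simp only [Finset.mem_filter, Finset.mem_univ, true_and, Function.comp_apply, hi]
    exact hx.2

end counting

section assembly

variable {n k : ℕ}

lemma ofFn_congr1 {A : Type} {p q : ℕ} (h : p = q) (F : Fin p → A) (G : Fin q → A)
    (hFG : ∀ i : Fin p, F i = G (Fin.cast h i)) : List.ofFn F = List.ofFn G := by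
  subst h
  exact congrArg _ (funext fun i => hFG i)

lemma word_eq (hk : k ≤ n) (f : Fin n → Fin n) (a : Fin k → Fin n)
    (φ : Fin k → Fin n) (hφ : Function.Injective φ) (hfa : f ∘ φ = a)
    (ψ' : Fin k → Fin ((n-k)+k)) (hψ' : Function.Injective ψ') :
    List.ofFn (asmFun a (f ∘ compEnum φ) (by omega : (n-k)+k-k = n-k) ψ')
      = List.ofFn (f ∘ asmPerm φ (Fin.cast (Nat.sub_add_cancel hk) ∘ ψ')) := by
  have hn : (n-k)+k = n := Nat.sub_add_cancel hk
  have hm₀ : (n-k)+k-k = n-k := by omega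
  set ψ : Fin k → Fin n := Fin.cast (Nat.sub_add_cancel hk) ∘ ψ' with hpsi
  have hψ : Function.Injective ψ := by
    intro x y hxy
    have hv := congrArg Fin.val hxy
    exact hψ' (Fin.ext hv)
  have e0 : (n-k)+k-k = n-k := hm₀
  have hcc : (fun s : Fin ((n-k)+k-k) => Fin.cast hn.symm (compEnum ψ (Fin.cast e0 s)))
      = compEnum ψ' := by
    apply compEnum_unique hψ'
    · intro s1 s2 hs
      exact (compEnum_strictMono hψ) (cast_strictMono e0 hs)
    · intro t ht
      rw [Finset.mem_image] at ht
      obtain ⟨j, -, hj⟩ := ht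
      have hv := congrArg Fin.val hj
      exact compEnum_ne hψ _ j (Fin.ext hv.symm)
  have hFF : (fun i : Fin ((n-k)+k) => f (asmPerm φ ψ (Fin.cast hn i)))
      = asmFun a (f ∘ compEnum φ) (by omega : (n-k)+k-k = n-k) ψ' := by
    apply asmFun_unique hψ'
    · intro j
      show f (asmPerm φ ψ (Fin.cast hn (ψ' j))) = a j
      have h1 : Fin.cast hn (ψ' j) = ψ j := Fin.ext rfl
      rw [h1, asmPerm_apply_psi hφ hψ]
      exact congrFun hfa j
    · intro t
      show f (asmPerm φ ψ (Fin.cast hn (compEnum ψ'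
        (Fin.cast (by omega : (n-k)+k-k = n-k).symm t)))) = (f ∘ compEnum φ) t
      have h2 : compEnum ψ' (Fin.cast (by omega : (n-k)+k-k = n-k).symm t)
          = Fin.cast hn.symm (compEnum ψ (Fin.cast e0
              (Fin.cast (by omega : (n-k)+k-k = n-k).symm t))) :=
        (congrFun hcc _).symm
      rw [h2]
      have h3 : Fin.cast hn (Fin.cast hn.symm (compEnum ψ (Fin.cast e0
          (Fin.cast (by omega : (n-k)+k-k = n-k).symm t))))
          = compEnum ψ (Fin.cast e0 (Fin.cast (by omega : (n-k)+k-k = n-k).symm t)) :=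
        Fin.ext rfl
      rw [h3]
      have h4 : Fin.cast e0 (Fin.cast (by omega : (n-k)+k-k = n-k).symm t) = t := Fin.ext rfl
      rw [h4, asmPerm_apply_comp hφ hψ]
      rfl
  apply ofFn_congr1 hn
  intro i
  exact (congrFun hFF i).symm

lemma comp_fiber_card {φ : Fin k → Fin n} (hφ : Function.Injective φ)
    (f : Fin n → Fin n) (j : Fin n) :
    (Finset.univ.filter (fun l : Fin k => f (φ l) = j)).card
      = ((Finset.univ.image φ).filter (fun x => f x = j)).card := by
  classical
  refine Finset.card_bij (fun l (_ : l ∈ Finset.univ.filter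
    (fun l : Fin k => f (φ l) = j)) => φ l) ?_ ?_ ?_
  · intro l hl
    simp only [Finset.mem_filter, Finset.mem_univ, true_and] at hl ⊢
    exact ⟨Finset.mem_image.2 ⟨l, Finset.mem_univ _, rfl⟩, hl⟩
  · intro l1 h1 l2 h2 heq
    exact hφ heq
  · intro x hx
    simp only [Finset.mem_filter] at hx
    obtain ⟨hx1, hx2⟩ := hx
    obtain ⟨l, -, rfl⟩ := Finset.mem_image.1 hx1
    refine ⟨l, ?_, rfl⟩
    simp only [Finset.mem_filter, Finset.mem_univ, true_and]
    exact hx2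

end assembly

section fiber

variable {n k : ℕ}

lemma fiber_sum (hk : k ≤ n) (f : Fin n → Fin n) (τ : Equiv.Perm (Fin n))
    (s : Finset (Fin n)) (hcard : s.card = n - k)
    (hincr : ∀ i ∈ s, ∀ j ∈ s, i < j → τ⁻¹ i < τ⁻¹ j) :
    ∑ p ∈ ((Finset.univ.filter (fun φ : Fin k → Fin n =>
          Function.Injective φ ∧ Monotone (f ∘ φ))) ×ˢ
        (Finset.univ.filter (fun ψ : Fin k → Fin n => Function.Injective ψ))).filter
        (fun p => (asmPerm p.1 p.2, ((Finset.univ.image p.1)ᶜ : Finset (Fin n))) = (τ, s)),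
      (((∏ j : Fin n, Nat.factorial
          ((Finset.univ.filter (fun l : Fin k => (f ∘ p.1) l = j)).card) : ℕ) : ℂ))⁻¹ •
        Finsupp.single (List.ofFn (f ∘ asmPerm p.1 p.2)) (1:ℂ)
      = Finsupp.single (List.ofFn (f ∘ τ)) (1:ℂ) := by
  classical
  have hTc : (sᶜ : Finset (Fin n)).card = k := by
    rw [Finset.card_compl, hcard]
    simp only [Fintype.card_fin]
    omega
  set C : ℕ := ∏ j : Fin n, Nat.factorial ((sᶜ.filter (fun x => f x = j)).card) with hC
  have hCne : C ≠ 0 := by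
    rw [hC]
    apply Finset.prod_ne_zero_iff.2
    intro j _
    exact Nat.factorial_ne_zero _
  -- facts about fiber members
  have hmem : ∀ p ∈ ((Finset.univ.filter (fun φ : Fin k → Fin n =>
          Function.Injective φ ∧ Monotone (f ∘ φ))) ×ˢ
        (Finset.univ.filter (fun ψ : Fin k → Fin n => Function.Injective ψ))).filter
        (fun p => (asmPerm p.1 p.2, ((Finset.univ.image p.1)ᶜ : Finset (Fin n))) = (τ, s)),
      Function.Injective p.1 ∧ Monotone (f ∘ p.1) ∧ Function.Injective p.2 ∧
        asmPerm p.1 p.2 = τ ∧ Finset.univ.image p.1 = sᶜ := by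
    intro p hp
    simp only [Finset.mem_filter, Finset.mem_product, Finset.mem_univ, true_and,
      Prod.mk.injEq] at hp
    obtain ⟨⟨⟨h1, h2⟩, h3⟩, h4, h5⟩ := hp
    refine ⟨h1, h2, h3, h4, ?_⟩
    rw [← h5, compl_compl]
  -- each summand is constant
  have hconst : ∀ p ∈ ((Finset.univ.filter (fun φ : Fin k → Fin n =>
          Function.Injective φ ∧ Monotone (f ∘ φ))) ×ˢ
        (Finset.univ.filter (fun ψ : Fin k → Fin n => Function.Injective ψ))).filter
        (fun p => (asmPerm p.1 p.2, ((Finset.univ.image p.1)ᶜ : Finset (Fin n))) = (τ, s)),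
      (((∏ j : Fin n, Nat.factorial
          ((Finset.univ.filter (fun l : Fin k => (f ∘ p.1) l = j)).card) : ℕ) : ℂ))⁻¹ •
        Finsupp.single (List.ofFn (f ∘ asmPerm p.1 p.2)) (1:ℂ)
      = ((C : ℂ))⁻¹ • Finsupp.single (List.ofFn (f ∘ τ)) (1:ℂ) := by
    intro p hp
    obtain ⟨h1, h2, h3, h4, h5⟩ := hmem p hp
    have hcc : (∏ j : Fin n, Nat.factorial
        ((Finset.univ.filter (fun l : Fin k => (f ∘ p.1) l = j)).card)) = C := by
      rw [hC]
      apply Finset.prod_congr rfl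
      intro j _
      congr 1
      rw [show (Finset.univ.filter (fun l : Fin k => (f ∘ p.1) l = j))
          = (Finset.univ.filter (fun l : Fin k => f (p.1 l) = j)) from rfl]
      rw [comp_fiber_card h1 f j, h5]
    rw [hcc, h4]
  rw [Finset.sum_congr rfl hconst, Finset.sum_const]
  -- fiber cardinality
  have hcardfib : (((Finset.univ.filter (fun φ : Fin k → Fin n =>
          Function.Injective φ ∧ Monotone (f ∘ φ))) ×ˢ
        (Finset.univ.filter (fun ψ : Fin k → Fin n => Function.Injective ψ))).filter
        (fun p => (asmPerm p.1 p.2, ((Finset.univ.image p.1)ᶜ : Finset (Fin n))) = (τ, s))).card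
      = C := by
    rw [hC, ← card_filter_monotone sᶜ hTc f]
    apply Finset.card_bij (fun p _ => p.1)
    · intro p hp
      obtain ⟨h1, h2, h3, h4, h5⟩ := hmem p hp
      simp only [Finset.mem_filter, Finset.mem_univ, true_and]
      exact ⟨h1, h5, h2⟩
    · intro p1 hp1 p2 hp2 heq
      obtain ⟨h11, h12, h13, h14, h15⟩ := hmem p1 hp1
      obtain ⟨h21, h22, h23, h24, h25⟩ := hmem p2 hp2
      have hpsi : p1.2 = p2.2 := by
        funext j
        have e1 : p1.2 j = τ⁻¹ (p1.1 j) := by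
          rw [← h14]
          exact (asmPerm_symm_psi h11 h13 j).symm
        have e2 : p2.2 j = τ⁻¹ (p2.1 j) := by
          rw [← h24]
          exact (asmPerm_symm_psi h21 h23 j).symm
        rw [e1, e2, heq]
      exact Prod.ext heq hpsi
    · intro φ hφ
      simp only [Finset.mem_filter, Finset.mem_univ, true_and] at hφ
      obtain ⟨hinj, himg, hmono⟩ := hφ
      set ψ : Fin k → Fin n := fun j => τ⁻¹ (φ j) with hψdef
      have hψinj : Function.Injective ψ :=
        fun x y hxy => hinj ((τ⁻¹ : Equiv.Perm (Fin n)).injective hxy)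
      have hnotmem : ∀ t : Fin (n - k), compEnum φ t ∈ s := by
        intro t
        have := compEnum_not_mem hinj t
        rw [himg] at this
        simpa using this
      have hcc2 : (fun t : Fin (n - k) => τ⁻¹ (compEnum φ t)) = compEnum ψ := by
        apply compEnum_unique hψinj
        · intro t1 t2 ht
          exact hincr _ (hnotmem t1) _ (hnotmem t2) ((compEnum_strictMono hinj) ht)
        · intro t ht
          rw [Finset.mem_image] at ht
          obtain ⟨j, -, hj⟩ := ht
          have : φ j = compEnum φ t := (τ⁻¹ : Equiv.Perm (Fin n)).injective hj
          exact compEnum_ne hinj t j this.symm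
      have hap : asmPerm φ ψ = τ := by
        apply Equiv.ext
        intro i
        by_cases hi : i ∈ Finset.univ.image ψ
        · obtain ⟨j, -, rfl⟩ := Finset.mem_image.1 hi
          rw [asmPerm_apply_psi hinj hψinj]
          show φ j = τ (τ⁻¹ (φ j))
          rw [Equiv.Perm.coe_inv, Equiv.apply_symm_apply]
        · obtain ⟨t, rfl⟩ := compEnum_surj hψinj hi
          rw [asmPerm_apply_comp hinj hψinj]
          have : τ (compEnum ψ t) = τ (τ⁻¹ (compEnum φ t)) := by
            rw [congrFun hcc2 t]
          rw [this, Equiv.Perm.coe_inv, Equiv.apply_symm_apply]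
      refine ⟨(φ, ψ), ?_, rfl⟩
      simp only [Finset.mem_filter, Finset.mem_product, Finset.mem_univ, true_and,
        Prod.mk.injEq]
      exact ⟨⟨⟨hinj, hmono⟩, hψinj⟩, hap, by rw [himg, compl_compl]⟩
  rw [hcardfib, ← Nat.cast_smul_eq_nsmul ℂ, smul_smul,
    mul_inv_cancel₀ (Nat.cast_ne_zero.2 hCne), one_smul]

end fiber

end Aux

open scoped Classical in
/-- The symmetrized shuffling operator
`ν_k = Σ_{1 ≤ a₁ ≤ ⋯ ≤ a_k ≤ n} (1/∏_j #{l : a_l = j}!) · sh_{a₁}∘⋯∘sh_{a_k}∘∂_{a₁}∘⋯∘∂_{a_k}`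
on the word algebra over the alphabet `{1,…,n}` (here `Fin n`). -/
noncomputable def nuOp (n k : ℕ) :
    (List (Fin n) →₀ ℂ) →ₗ[ℂ] (List (Fin n) →₀ ℂ) :=
  ∑ a ∈ Finset.univ.filter (fun a : Fin k → Fin n => Monotone a),
    (((∏ j : Fin n,
        Nat.factorial ((Finset.univ.filter (fun l : Fin k => a l = j)).card) : ℕ) : ℂ))⁻¹ •
      ((shChain (Fin n) (List.ofFn a)).comp (delChain (Fin n) (List.ofFn a)))

/-- `noninv n k σ` is the number of increasing subsequences of length `k` of `σ ∈ S_n`. -/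
def noninv (n k : ℕ) (σ : Equiv.Perm (Fin n)) : ℕ :=
  ((Finset.univ : Finset (Fin n)).powerset.filter
    (fun s => s.card = k ∧ ∀ i ∈ s, ∀ j ∈ s, i < j → σ⁻¹ i < σ⁻¹ j)).card

/-- The symmetrized shuffling operator `ν_k`, defined on words of length `n` by
`ν_k(w) = Σ_{τ ∈ S_n} noninv_{n−k}(τ)·(w·τ)`, coincides with
`Σ_{1 ≤ a₁ ≤ ⋯ ≤ a_k ≤ n} (1/∏_j #{l : a_l = j}!)·sh_{a₁}∘⋯∘sh_{a_k}∘∂_{a₁}∘⋯∘∂_{a_k}`. -/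
theorem nuOp_eq_sum_noninv (n k : ℕ) (hk : k ≤ n) (w : List (Fin n)) (hw : w.length = n) :
    nuOp n k (Finsupp.single w 1)
      = ∑ τ : Equiv.Perm (Fin n), (noninv n (n - k) τ : ℂ) •
          Finsupp.single (List.ofFn fun i => w.get (Fin.cast hw.symm (τ i))) 1 := by
  classical
  set f : Fin n → Fin n := fun i => w.get (Fin.cast hw.symm i) with hf
  have hwf : w = List.ofFn f := by
    apply List.ext_get (by rw [List.length_ofFn, hw])
    intro i h1 h2
    rw [List.get_ofFn]
    exact congrArg w.get (Fin.ext rfl)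
  have hinjiff : ∀ ψ' : Fin k → Fin ((n-k)+k),
      Function.Injective ψ' ↔
        Function.Injective (Fin.cast (Nat.sub_add_cancel hk) ∘ ψ') := by
    intro ψ'
    constructor
    · intro h x y hxy
      have hv := congrArg Fin.val hxy
      exact h (Fin.ext hv)
    · intro h x y hxy
      have hv := congrArg Fin.val hxy
      exact h (Fin.ext hv)
  -- Step A: chains on a basis word
  have mainA : ∀ a : Fin k → Fin n,
      (shChain (Fin n) (List.ofFn a)) ((delChain (Fin n) (List.ofFn a)) (Finsupp.single w 1))
        = ∑ φ ∈ Finset.univ.filter (fun φ : Fin k → Fin n =>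
              Function.Injective φ ∧ f ∘ φ = a),
            ∑ ψ ∈ Finset.univ.filter (fun ψ : Fin k → Fin n => Function.Injective ψ),
              Finsupp.single (List.ofFn (f ∘ asmPerm φ ψ)) (1:ℂ) := by
    intro a
    conv_lhs => rw [hwf]
    rw [delChain_ofFn a f, map_sum]
    apply Finset.sum_congr rfl
    intro φ hφmem
    simp only [Finset.mem_filter, Finset.mem_univ, true_and] at hφmem
    obtain ⟨hφinj, hfa⟩ := hφmem
    rw [shChain_ofFn a (f ∘ compEnum φ)]
    refine Finset.sum_equiv
      (Equiv.arrowCongr (Equiv.refl (Fin k)) (finCongr (Nat.sub_add_cancel hk))) ?_ ?_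
    · intro ψ'
      simp only [Finset.mem_filter, Finset.mem_univ, true_and]
      exact hinjiff ψ'
    · intro ψ' hψ'
      simp only [Finset.mem_filter, Finset.mem_univ, true_and] at hψ'
      rw [word_eq hk f a φ hφinj hfa ψ' hψ']
      rfl
  -- Step B: apply mainA under the nuOp sum
  unfold nuOp
  rw [LinearMap.sum_apply]
  have stepB : ∀ a ∈ Finset.univ.filter (fun a : Fin k → Fin n => Monotone a),
      ((((∏ j : Fin n, Nat.factorial
            ((Finset.univ.filter (fun l : Fin k => a l = j)).card) : ℕ) : ℂ))⁻¹ •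
          ((shChain (Fin n) (List.ofFn a)).comp (delChain (Fin n) (List.ofFn a))))
          (Finsupp.single w 1)
        = ∑ φ ∈ Finset.univ.filter (fun φ : Fin k → Fin n =>
              Function.Injective φ ∧ f ∘ φ = a),
            (((∏ j : Fin n, Nat.factorial
              ((Finset.univ.filter (fun l : Fin k => (f ∘ φ) l = j)).card) : ℕ) : ℂ))⁻¹ •
              ∑ ψ ∈ Finset.univ.filter (fun ψ : Fin k → Fin n => Function.Injective ψ),
                Finsupp.single (List.ofFn (f ∘ asmPerm φ ψ)) (1:ℂ) := by
    intro a ha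
    rw [LinearMap.smul_apply, LinearMap.comp_apply, mainA a, Finset.smul_sum]
    apply Finset.sum_congr rfl
    intro φ hφ
    simp only [Finset.mem_filter, Finset.mem_univ, true_and] at hφ
    rw [hφ.2]
  rw [Finset.sum_congr rfl stepB]
  -- Step C: merge the (a, φ) double sum into a single φ sum
  rw [Finset.sum_sigma']
  have stepC : ∑ p ∈ (Finset.univ.filter (fun a : Fin k → Fin n => Monotone a)).sigma
        (fun a => Finset.univ.filter (fun φ : Fin k → Fin n =>
          Function.Injective φ ∧ f ∘ φ = a)),
        (((∏ j : Fin n, Nat.factorial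
          ((Finset.univ.filter (fun l : Fin k => (f ∘ p.2) l = j)).card) : ℕ) : ℂ))⁻¹ •
          ∑ ψ ∈ Finset.univ.filter (fun ψ : Fin k → Fin n => Function.Injective ψ),
            Finsupp.single (List.ofFn (f ∘ asmPerm p.2 ψ)) (1:ℂ)
      = ∑ φ ∈ Finset.univ.filter (fun φ : Fin k → Fin n =>
            Function.Injective φ ∧ Monotone (f ∘ φ)),
          (((∏ j : Fin n, Nat.factorial
            ((Finset.univ.filter (fun l : Fin k => (f ∘ φ) l = j)).card) : ℕ) : ℂ))⁻¹ •
            ∑ ψ ∈ Finset.univ.filter (fun ψ : Fin k → Fin n => Function.Injective ψ),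
              Finsupp.single (List.ofFn (f ∘ asmPerm φ ψ)) (1:ℂ) := by
    refine Finset.sum_bij (fun p _ => p.2) ?_ ?_ ?_ ?_
    · rintro ⟨a, φ⟩ hp
      simp only [Finset.mem_sigma, Finset.mem_filter, Finset.mem_univ, true_and] at hp
      simp only [Finset.mem_filter, Finset.mem_univ, true_and]
      exact ⟨hp.2.1, hp.2.2 ▸ hp.1⟩
    · rintro ⟨a1, φ1⟩ hp1 ⟨a2, φ2⟩ hp2 heq
      simp only [Finset.mem_sigma, Finset.mem_filter, Finset.mem_univ, true_and] at hp1 hp2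
      simp only at heq
      subst heq
      obtain rfl : a1 = a2 := by rw [← hp1.2.2, ← hp2.2.2]
      rfl
    · intro φ hφ
      simp only [Finset.mem_filter, Finset.mem_univ, true_and] at hφ
      refine ⟨⟨f ∘ φ, φ⟩, ?_, rfl⟩
      simp only [Finset.mem_sigma, Finset.mem_filter, Finset.mem_univ, true_and]
      exact ⟨hφ.2, hφ.1, trivial⟩
    · intros
      rfl
  rw [stepC]
  -- Step D: push the scalar inside and go to a product index
  have stepD : ∀ φ ∈ Finset.univ.filter (fun φ : Fin k → Fin n =>
        Function.Injective φ ∧ Monotone (f ∘ φ)),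
      (((∏ j : Fin n, Nat.factorial
        ((Finset.univ.filter (fun l : Fin k => (f ∘ φ) l = j)).card) : ℕ) : ℂ))⁻¹ •
        ∑ ψ ∈ Finset.univ.filter (fun ψ : Fin k → Fin n => Function.Injective ψ),
          Finsupp.single (List.ofFn (f ∘ asmPerm φ ψ)) (1:ℂ)
      = ∑ ψ ∈ Finset.univ.filter (fun ψ : Fin k → Fin n => Function.Injective ψ),
          (((∏ j : Fin n, Nat.factorial
            ((Finset.univ.filter (fun l : Fin k => (f ∘ φ) l = j)).card) : ℕ) : ℂ))⁻¹ •
            Finsupp.single (List.ofFn (f ∘ asmPerm φ ψ)) (1:ℂ) := by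
    intro φ _
    rw [Finset.smul_sum]
  rw [Finset.sum_congr rfl stepD, ← Finset.sum_product']
  -- Step R: rewrite the right-hand side as a sum over pairs (τ, s)
  have stepR : ∑ τ : Equiv.Perm (Fin n), (noninv n (n - k) τ : ℂ) •
        Finsupp.single (List.ofFn fun i => w.get (Fin.cast hw.symm (τ i))) (1:ℂ)
      = ∑ q ∈ (Finset.univ ×ˢ (Finset.univ : Finset (Fin n)).powerset).filter
          (fun q : Equiv.Perm (Fin n) × Finset (Fin n) =>
            q.2.card = n - k ∧ ∀ i ∈ q.2, ∀ j ∈ q.2, i < j → q.1⁻¹ i < q.1⁻¹ j),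
          Finsupp.single (List.ofFn (f ∘ q.1)) (1:ℂ) := by
    have h1 : ∀ τ : Equiv.Perm (Fin n), (noninv n (n - k) τ : ℂ) •
        Finsupp.single (List.ofFn fun i => w.get (Fin.cast hw.symm (τ i))) (1:ℂ)
        = ∑ _s ∈ (Finset.univ : Finset (Fin n)).powerset.filter
            (fun s => s.card = n - k ∧ ∀ i ∈ s, ∀ j ∈ s, i < j → τ⁻¹ i < τ⁻¹ j),
            Finsupp.single (List.ofFn (f ∘ τ)) (1:ℂ) := by
      intro τ
      rw [Finset.sum_const, ← Nat.cast_smul_eq_nsmul ℂ]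
      congr 1
    rw [Finset.sum_congr rfl (fun τ _ => h1 τ), Finset.sum_sigma']
    refine Finset.sum_bij (fun p _ => ((p.1, p.2) : Equiv.Perm (Fin n) × Finset (Fin n)))
      ?_ ?_ ?_ ?_
    · rintro ⟨τ, s⟩ hp
      simp only [Finset.mem_sigma, Finset.mem_filter, Finset.mem_univ, true_and,
        Finset.mem_product, Finset.mem_powerset] at hp ⊢
      exact ⟨hp.1, hp.2⟩
    · rintro ⟨τ1, s1⟩ hp1 ⟨τ2, s2⟩ hp2 heq
      simp only [Prod.mk.injEq] at heq
      obtain ⟨rfl, rfl⟩ := heq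
      rfl
    · rintro ⟨τ, s⟩ hq
      simp only [Finset.mem_filter, Finset.mem_product, Finset.mem_univ, true_and,
        Finset.mem_powerset] at hq
      refine ⟨⟨τ, s⟩, ?_, rfl⟩
      simp only [Finset.mem_sigma, Finset.mem_filter, Finset.mem_univ, true_and,
        Finset.mem_powerset]
      exact ⟨hq.1, hq.2⟩
    · intros
      rfl
  rw [stepR]
  -- Step E: fiberwise summation over Θ
  have hmaps : ∀ p ∈ (Finset.univ.filter (fun φ : Fin k → Fin n =>
        Function.Injective φ ∧ Monotone (f ∘ φ))) ×ˢ
      (Finset.univ.filter (fun ψ : Fin k → Fin n => Function.Injective ψ)),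
      ((asmPerm p.1 p.2, ((Finset.univ.image p.1)ᶜ : Finset (Fin n))) :
        Equiv.Perm (Fin n) × Finset (Fin n))
        ∈ (Finset.univ ×ˢ (Finset.univ : Finset (Fin n)).powerset).filter
          (fun q : Equiv.Perm (Fin n) × Finset (Fin n) =>
            q.2.card = n - k ∧ ∀ i ∈ q.2, ∀ j ∈ q.2, i < j → q.1⁻¹ i < q.1⁻¹ j) := by
    rintro ⟨φ, ψ⟩ hp
    simp only [Finset.mem_product, Finset.mem_filter, Finset.mem_univ, true_and] at hp
    obtain ⟨⟨hφinj, hφmono⟩, hψinj⟩ := hp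
    simp only [Finset.mem_filter, Finset.mem_product, Finset.mem_univ, true_and,
      Finset.mem_powerset]
    refine ⟨Finset.subset_univ _, ?_, ?_⟩
    · rw [Finset.card_compl, Finset.card_image_of_injective _ hφinj]
      simp
    · intro i hi j hj hij
      obtain ⟨t1, rfl⟩ := compEnum_surj hφinj (Finset.mem_compl.1 hi)
      obtain ⟨t2, rfl⟩ := compEnum_surj hφinj (Finset.mem_compl.1 hj)
      have ht : t1 < t2 := (compEnum_strictMono hφinj).lt_iff_lt.1 hij
      show (asmPerm φ ψ)⁻¹ _ < (asmPerm φ ψ)⁻¹ _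
      rw [asmPerm_symm_comp hφinj hψinj, asmPerm_symm_comp hφinj hψinj]
      exact compEnum_strictMono hψinj ht
  rw [← Finset.sum_fiberwise_of_maps_to hmaps]
  apply Finset.sum_congr rfl
  rintro ⟨τ, s⟩ hq
  simp only [Finset.mem_filter, Finset.mem_product, Finset.mem_univ, true_and,
    Finset.mem_powerset] at hq
  exact fiber_sum hk f τ s hq.2.1 hq.2.2
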